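/- The minor identity M^{(k+1)}_{i,j} · M^{(k-1)}_{i+1,j+1} = M^{(k)}_{i,j} M^{(k)}_{i+1,j+1} − M^{(k)}_{i,j+1} M^{(k)}_{i+1,j}, where M^{(k)}_{i,j} = det A[{i,...,i+k},{j,...,j+k}], holds for any n-by-n real matrix A and valid indices. -/

import Mathlib

open Matrix

open Matrix

/-- `A` is totally positive: every minor (with strictly increasing row and
column index selections) is positive. -/
def IsTP {α β : Type} [LinearOrder α] [LinearOrder β] (A : Matrix α β ℝ) : Prop :=
  ∀ (l : ℕ) (r : Fin l → α) (c : Fin l → β), StrictMono r → StrictMono c →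
    0 < (A.submatrix r c).det

/-- `A` is `TP_k`: every minor of order at most `k` is positive. -/
def IsTPk {α β : Type} [LinearOrder α] [LinearOrder β] (A : Matrix α β ℝ) (k : ℕ) : Prop :=
  ∀ (l : ℕ), l ≤ k → ∀ (r : Fin l → α) (c : Fin l → β), StrictMono r → StrictMono c →
    0 < (A.submatrix r c).det

/-- `k`-subsets of `{1,…,n}`, encoded as strictly increasing tuples. -/
abbrev STuple (n k : ℕ) : Type := {f : Fin k → Fin n // StrictMono f}

noncomputable instance lexPi {n k : ℕ} : LinearOrder (Lex (Fin k → Fin n)) :=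
  @Pi.Lex.linearOrder (Fin k) (fun _ => Fin n) _
    Finite.to_wellFoundedLT _

/-- The lexicographic linear order on `k`-subsets. -/
noncomputable instance {n k : ℕ} : LinearOrder (STuple n k) :=
  LinearOrder.lift' (fun s => toLex s.1) (fun _ _ h => Subtype.ext (congrArg ofLex h))

/-- The `k`-th compound matrix of `A`: the matrix of all `k×k` minors of `A`,
rows and columns indexed by `k`-subsets ordered lexicographically. -/
noncomputable def compound {n : ℕ} (A : Matrix (Fin n) (Fin n) ℝ) (k : ℕ) :
    Matrix (STuple n k) (STuple n k) ℝ :=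
  fun s t => (A.submatrix s.1 t.1).det

/-- The `k`-th Dodgson condensation matrix of `A`: the `(n-k) × (n-k)` matrix of
contiguous minors of order `k+1` (0-indexed positions). -/
noncomputable def Dmat {n : ℕ} (A : Matrix (Fin n) (Fin n) ℝ) (k : ℕ) :
    Matrix (Fin (n - k)) (Fin (n - k)) ℝ :=
  fun i j =>
    (A.submatrix
      (fun p : Fin (k + 1) => (⟨i.1 + p.1, by have := i.2; have := p.2; omega⟩ : Fin n))
      (fun p : Fin (k + 1) => (⟨j.1 + p.1, by have := j.2; have := p.2; omega⟩ : Fin n))).det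

/-- The contiguous minor of `A` of order `sz` with top-left position `(i, j)`
(0-indexed): `det A[{i,…,i+sz-1},{j,…,j+sz-1}]`. -/
noncomputable def cminor {n : ℕ} (A : Matrix (Fin n) (Fin n) ℝ) (sz i j : ℕ)
    (hi : i + sz ≤ n) (hj : j + sz ≤ n) : ℝ :=
  (A.submatrix (fun p : Fin sz => (⟨i + p.1, by have := p.2; omega⟩ : Fin n))
               (fun p : Fin sz => (⟨j + p.1, by have := p.2; omega⟩ : Fin n))).det


section DesnanotJacobiAux
open Polynomial


variable {R : Type*} [CommRing R] {s : ℕ}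

/-- interior embedding -/
def mid' (s : ℕ) : Fin s → Fin (s + 2) := fun k => ⟨k.1 + 1, by omega⟩

/-- corner embedding -/
def cor' (s : ℕ) : Fin 2 → Fin (s + 2) := fun l => if l = 0 then 0 else Fin.last (s + 1)

def f (s : ℕ) : Fin 2 ⊕ Fin s → Fin (s + 2) := Sum.elim (cor' s) (mid' s)

lemma f_bij (s : ℕ) : Function.Bijective (f s) := by
  rw [Fintype.bijective_iff_injective_and_card]
  constructor
  · rintro (a | a) (b | b) h <;>
      simp only [f, Sum.elim_inl, Sum.elim_inr, cor', mid'] at h <;>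
      [skip; skip; skip; skip]
    · rcases Fin.exists_fin_two.mp ⟨a, rfl⟩ with _ | _ <;> fin_cases a <;> fin_cases b <;>
        simp_all [Fin.ext_iff] <;> omega
    · exfalso; split_ifs at h <;> simp [Fin.ext_iff, Fin.last] at h <;> omega
    · exfalso; split_ifs at h <;> simp [Fin.ext_iff, Fin.last] at h <;> omega
    · simp only [Fin.mk.injEq] at h
      exact congrArg Sum.inr (Fin.ext (by omega))
  · simp; omega

noncomputable def e (s : ℕ) : Fin 2 ⊕ Fin s ≃ Fin (s + 2) := Equiv.ofBijective _ (f_bij s)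

lemma e_apply (x : Fin 2 ⊕ Fin s) : e s x = f s x := rfl

/-- Key multiplicative identity. -/
lemma key1 (B : Matrix (Fin (s + 2)) (Fin (s + 2)) R) :
    B.det * (adjugate B (cor' s 0) (cor' s 0) * adjugate B (cor' s 1) (cor' s 1)
      - adjugate B (cor' s 0) (cor' s 1) * adjugate B (cor' s 1) (cor' s 0))
    = B.det * (B.det * (B.submatrix (mid' s) (mid' s)).det) := by
  classical
  set P : Matrix (Fin 2) (Fin 2) R := fun a b => adjugate B (cor' s a) (cor' s b) with hP
  set Q : Matrix (Fin s) (Fin 2) R := fun k b => adjugate B (mid' s k) (cor' s b) with hQ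
  set Rm : Matrix (Fin 2) (Fin s) R := fun a l => B (cor' s a) (mid' s l) with hRm
  set Bint : Matrix (Fin s) (Fin s) R := B.submatrix (mid' s) (mid' s) with hBint
  have hmul : (B.submatrix (e s) (e s)) * (fromBlocks P 0 Q 1)
      = fromBlocks (B.det • (1 : Matrix (Fin 2) (Fin 2) R)) Rm 0 Bint := by
    ext a b
    rcases b with b | b
    · -- column in corner block: uses B * adjugate B = det • 1
      have hsum : ∀ x : Fin (s + 2),
          (∑ c : Fin 2 ⊕ Fin s, B x (e s c) * adjugate B (f s c) (cor' s b))
            = B.det * (1 : Matrix (Fin (s+2)) (Fin (s+2)) R) x (cor' s b) := by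
        intro x
        have := Equiv.sum_comp (e s) (fun k => B x k * adjugate B k (cor' s b))
        rw [show (∑ c : Fin 2 ⊕ Fin s, B x (e s c) * adjugate B (f s c) (cor' s b))
            = ∑ c : Fin 2 ⊕ Fin s, (fun k => B x k * adjugate B k (cor' s b)) (e s c) from rfl,
          this]
        have h2 := congrFun (congrFun (mul_adjugate B) x) (cor' s b)
        simpa [Matrix.mul_apply, Matrix.smul_apply, smul_eq_mul] using h2
      rcases a with a | a
      · have := hsum (cor' s a)
        simp only [Matrix.mul_apply, Matrix.submatrix_apply, fromBlocks_apply₁₁,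
          fromBlocks_apply₂₁, Fintype.sum_sum_type, Matrix.smul_apply, smul_eq_mul]
        rw [show (∑ c : Fin 2, B ((e s) (Sum.inl a)) ((e s) (Sum.inl c)) * P c b)
              + (∑ c : Fin s, B ((e s) (Sum.inl a)) ((e s) (Sum.inr c)) * Q c b)
            = ∑ c : Fin 2 ⊕ Fin s, B (e s (Sum.inl a)) (e s c) * adjugate B (f s c) (cor' s b) by
          rw [Fintype.sum_sum_type]; rfl]
        rw [show e s (Sum.inl a) = cor' s a from rfl, hsum (cor' s a)]
        have hcorinj : (cor' s a = cor' s b) ↔ a = b := by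
          constructor
          · intro h; revert h; fin_cases a <;> fin_cases b <;> simp [cor', Fin.ext_iff, Fin.last] <;> omega
          · rintro rfl; rfl
        simp [Matrix.one_apply, hcorinj]
      · simp only [Matrix.mul_apply, Matrix.submatrix_apply, fromBlocks_apply₁₁,
          fromBlocks_apply₂₁, Fintype.sum_sum_type]
        rw [show (∑ c : Fin 2, B ((e s) (Sum.inr a)) ((e s) (Sum.inl c)) * P c b)
              + (∑ c : Fin s, B ((e s) (Sum.inr a)) ((e s) (Sum.inr c)) * Q c b)
            = ∑ c : Fin 2 ⊕ Fin s, B (e s (Sum.inr a)) (e s c) * adjugate B (f s c) (cor' s b) by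
          rw [Fintype.sum_sum_type]; rfl]
        rw [show e s (Sum.inr a) = mid' s a from rfl, hsum (mid' s a)]
        have : mid' s a ≠ cor' s b := by
          fin_cases b <;> simp [mid', cor', Fin.ext_iff, Fin.last] <;> omega
        simp [Matrix.one_apply, this]
    · -- column in interior block
      rcases a with a | a <;>
      · simp only [Matrix.mul_apply, Matrix.submatrix_apply, Fintype.sum_sum_type,
          fromBlocks_apply₁₂, fromBlocks_apply₂₂, fromBlocks_apply₁₁, fromBlocks_apply₂₁,
          Matrix.zero_apply, mul_zero, Finset.sum_const_zero, zero_add, Matrix.one_apply,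
          mul_ite, mul_one, Finset.sum_ite_eq', Finset.mem_univ, if_true]
        simp [hRm, hBint, e_apply, f]
  have h1 : (B.submatrix (e s) (e s)).det = B.det := det_submatrix_equiv_self _ _
  have h2 := congrArg Matrix.det hmul
  rw [Matrix.det_mul, h1, det_fromBlocks_zero₁₂, det_fromBlocks_zero₂₁] at h2
  have hdetP : P.det = adjugate B (cor' s 0) (cor' s 0) * adjugate B (cor' s 1) (cor' s 1)
      - adjugate B (cor' s 0) (cor' s 1) * adjugate B (cor' s 1) (cor' s 0) := by
    rw [Matrix.det_fin_two]
  have hsmul : (B.det • (1 : Matrix (Fin 2) (Fin 2) R)).det = B.det * B.det := by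
    rw [Matrix.det_smul]; simp [sq]
  rw [hdetP] at h2
  rw [hsmul, det_one, mul_one] at h2
  rw [h2]; ring
variable {R : Type*} [CommRing R] {s : ℕ}



lemma key2 (B : Matrix (Fin (s + 2)) (Fin (s + 2)) R) :
    adjugate B (cor' s 0) (cor' s 0) * adjugate B (cor' s 1) (cor' s 1)
      - adjugate B (cor' s 0) (cor' s 1) * adjugate B (cor' s 1) (cor' s 0)
    = B.det * (B.submatrix (mid' s) (mid' s)).det := by
  classical
  set g : Matrix (Fin (s+2)) (Fin (s+2)) R[X] :=
    B.map Polynomial.C + (Polynomial.X : R[X]) • (1 : Matrix _ _ R[X]) with hg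
  have hreg : IsLeftRegular g.det := by
    refine (Polynomial.Monic.isRegular ?_).left
    simp only [hg, Polynomial.Monic.def, ← Polynomial.leadingCoeff_det_X_one_add_C B, add_comm]
  have hmap : g.map (evalRingHom (0:R)) = B := by
    ext i j
    simp [hg, Matrix.map_apply, Matrix.add_apply, Matrix.smul_apply, Matrix.one_apply,
      apply_ite (eval (0:R))]
  have hpoly := hreg (key1 g)
  have hmapped := congrArg (evalRingHom (0:R)) hpoly
  have hadjmat : (adjugate g).map (evalRingHom (0:R)) = adjugate B := by
    have h := RingHom.map_adjugate (evalRingHom (0:R)) g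
    simp only [RingHom.mapMatrix_apply] at h
    rw [hmap] at h
    exact h
  have hadj : ∀ a b, evalRingHom (0:R) (adjugate g a b) = adjugate B a b := by
    intro a b
    have := congrFun (congrFun hadjmat a) b
    simpa [Matrix.map_apply] using this
  have hdet : evalRingHom (0:R) g.det = B.det := by
    rw [RingHom.map_det]
    simp only [RingHom.mapMatrix_apply, hmap]
  have hint : evalRingHom (0:R) (g.submatrix (mid' s) (mid' s)).det
      = (B.submatrix (mid' s) (mid' s)).det := by
    rw [RingHom.map_det]
    simp only [RingHom.mapMatrix_apply]
    rw [← Matrix.submatrix_map, hmap]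
  simpa only [map_sub, _root_.map_mul, hadj, hdet, hint] using hmapped

/-- Translation of key2 into contiguous-submatrix determinants. -/
lemma key3 (B : Matrix (Fin (s + 2)) (Fin (s + 2)) R) :
    B.det * (B.submatrix (mid' s) (mid' s)).det
    = (B.submatrix Fin.castSucc Fin.castSucc).det * (B.submatrix Fin.succ Fin.succ).det
      - (B.submatrix Fin.castSucc Fin.succ).det * (B.submatrix Fin.succ Fin.castSucc).det := by
  rw [← key2 B]
  have h00 : adjugate B (cor' s 0) (cor' s 0) = (B.submatrix Fin.succ Fin.succ).det := by
    rw [show cor' s 0 = (0 : Fin (s+2)) from rfl,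
      adjugate_fin_succ_eq_det_submatrix]
    simp [Fin.succAbove_zero]
  have h11 : adjugate B (cor' s 1) (cor' s 1) = (B.submatrix Fin.castSucc Fin.castSucc).det := by
    rw [show cor' s 1 = Fin.last (s+1) from rfl, adjugate_fin_succ_eq_det_submatrix]
    simp [Fin.succAbove_last]
  have h01 : adjugate B (cor' s 0) (cor' s 1)
      = (-1)^(s+1) * (B.submatrix Fin.castSucc Fin.succ).det := by
    rw [show cor' s 0 = (0 : Fin (s+2)) from rfl, show cor' s 1 = Fin.last (s+1) from rfl,
      adjugate_fin_succ_eq_det_submatrix]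
    simp [Fin.succAbove_last, Fin.succAbove_zero, Fin.val_last]
  have h10 : adjugate B (cor' s 1) (cor' s 0)
      = (-1)^(s+1) * (B.submatrix Fin.succ Fin.castSucc).det := by
    rw [show cor' s 0 = (0 : Fin (s+2)) from rfl, show cor' s 1 = Fin.last (s+1) from rfl,
      adjugate_fin_succ_eq_det_submatrix]
    simp [Fin.succAbove_last, Fin.succAbove_zero, Fin.val_last]
  rw [h00, h11, h01, h10]
  have hsq : ((-1:R)^(s+1)) * ((-1:R)^(s+1)) = 1 := by
    rw [← pow_add]
    exact Even.neg_one_pow ⟨s+1, by ring⟩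
  have hXY : ∀ X Y : R, ((-1:R)^(s+1) * X) * ((-1:R)^(s+1) * Y) = X * Y := by
    intro X Y
    calc ((-1:R)^(s+1) * X) * ((-1:R)^(s+1) * Y)
        = ((-1:R)^(s+1) * (-1:R)^(s+1)) * (X * Y) := by ring
      _ = X * Y := by rw [hsq, one_mul]
  rw [hXY]
  ring
end DesnanotJacobiAux

/-- **Desnanot–Jacobi style identity for contiguous minors:**
`M⁽ᵏ⁺¹⁾_{i,j} · M⁽ᵏ⁻¹⁾_{i+1,j+1} = M⁽ᵏ⁾_{i,j} M⁽ᵏ⁾_{i+1,j+1} − M⁽ᵏ⁾_{i,j+1} M⁽ᵏ⁾_{i+1,j}`,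
where `M⁽ᵏ⁾_{i,j}` is the contiguous minor of order `k+1` at `(i,j)` (here
written with orders `s+1` and `s-1` replaced by `sz = s+1` and `sz - 2 = s-1`;
the order-`0` minor, i.e. the convention `M⁽⁻¹⁾ = 1`, is `det` of the empty
matrix, which is `1`). -/
theorem contiguous_minor_identity {n s : ℕ} (A : Matrix (Fin n) (Fin n) ℝ)
    (i j : ℕ) (hi : i + s + 2 ≤ n) (hj : j + s + 2 ≤ n) :
    cminor A (s + 2) i j hi hj * cminor A s (i + 1) (j + 1) (by omega) (by omega)
      = cminor A (s + 1) i j (by omega) (by omega)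
          * cminor A (s + 1) (i + 1) (j + 1) (by omega) (by omega)
        - cminor A (s + 1) i (j + 1) (by omega) (by omega)
          * cminor A (s + 1) (i + 1) j (by omega) (by omega) := by
  classical
  set B : Matrix (Fin (s + 2)) (Fin (s + 2)) ℝ :=
    A.submatrix (fun p : Fin (s + 2) => (⟨i + p.1, by have := p.2; omega⟩ : Fin n))
                (fun p : Fin (s + 2) => (⟨j + p.1, by have := p.2; omega⟩ : Fin n)) with hB
  have e1 : cminor A (s + 2) i j hi hj = B.det := rfl
  have e2 : cminor A s (i + 1) (j + 1) (by omega) (by omega)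
      = (B.submatrix (mid' s) (mid' s)).det := by
    unfold cminor
    rw [hB, Matrix.submatrix_submatrix]
    first
    | rfl
    | · congr 1
        funext p q
        simp only [Matrix.submatrix_apply, Function.comp_apply]
        exact congr
          (congrArg A (Fin.ext (by first | (simp [mid']; omega) | simp [mid'] | omega)))
          (Fin.ext (by first | (simp [mid']; omega) | simp [mid'] | omega))
  have e3 : cminor A (s + 1) i j (by omega) (by omega)
      = (B.submatrix Fin.castSucc Fin.castSucc).det := by
    unfold cminor
    rw [hB, Matrix.submatrix_submatrix]
    first
    | rfl
    | · congr 1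
        funext p q
        simp only [Matrix.submatrix_apply, Function.comp_apply]
        exact congr
          (congrArg A (Fin.ext (by first | (simp [mid']; omega) | simp [mid'] | omega)))
          (Fin.ext (by first | (simp [mid']; omega) | simp [mid'] | omega))
  have e4 : cminor A (s + 1) (i + 1) (j + 1) (by omega) (by omega)
      = (B.submatrix Fin.succ Fin.succ).det := by
    unfold cminor
    rw [hB, Matrix.submatrix_submatrix]
    first
    | rfl
    | · congr 1
        funext p q
        simp only [Matrix.submatrix_apply, Function.comp_apply]
        exact congr
          (congrArg A (Fin.ext (by first | (simp [mid']; omega) | simp [mid'] | omega)))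
          (Fin.ext (by first | (simp [mid']; omega) | simp [mid'] | omega))
  have e5 : cminor A (s + 1) i (j + 1) (by omega) (by omega)
      = (B.submatrix Fin.castSucc Fin.succ).det := by
    unfold cminor
    rw [hB, Matrix.submatrix_submatrix]
    first
    | rfl
    | · congr 1
        funext p q
        simp only [Matrix.submatrix_apply, Function.comp_apply]
        exact congr
          (congrArg A (Fin.ext (by first | (simp [mid']; omega) | simp [mid'] | omega)))
          (Fin.ext (by first | (simp [mid']; omega) | simp [mid'] | omega))
  have e6 : cminor A (s + 1) (i + 1) j (by omega) (by omega)
      = (B.submatrix Fin.succ Fin.castSucc).det := by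
    unfold cminor
    rw [hB, Matrix.submatrix_submatrix]
    first
    | rfl
    | · congr 1
        funext p q
        simp only [Matrix.submatrix_apply, Function.comp_apply]
        exact congr
          (congrArg A (Fin.ext (by first | (simp [mid']; omega) | simp [mid'] | omega)))
          (Fin.ext (by first | (simp [mid']; omega) | simp [mid'] | omega))
  rw [e1, e2, e3, e4, e5, e6]
  exact key3 B
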